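/- Let G = G_1 × G_2 be a direct product of two groups. Then the Cartan subgroups of G are exactly the subgroups of the form Q_1 × Q_2, where Q_i is a Cartan subgroup of G_i for i = 1, 2. -/

import Mathlib

/-- A Cartan subgroup in the sense of Chevalley: a maximal nilpotent subgroup such that
every subgroup of it which is normal and of finite index in it has finite index in its
normalizer in the ambient group. -/
def IsCartan {G : Type*} [Group G] (Q : Subgroup G) : Prop :=
  (Group.IsNilpotent Q ∧ ∀ H : Subgroup G, Group.IsNilpotent H → Q ≤ H → H = Q) ∧
  ∀ X : Subgroup G, X ≤ Q → (X.subgroupOf Q).Normal → (X.subgroupOf Q).FiniteIndex →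
    (X.subgroupOf (Subgroup.normalizer (X : Set G))).FiniteIndex

section CartanAux

variable {G₁ G₂ : Type*} [Group G₁] [Group G₂]

lemma myMapFstProd (A : Subgroup G₁) (B : Subgroup G₂) :
    (A.prod B).map (MonoidHom.fst G₁ G₂) = A := by
  ext a
  constructor
  · rintro ⟨⟨x, y⟩, ⟨hx, hy⟩, rfl⟩; exact hx
  · intro ha; exact ⟨(a, 1), ⟨ha, B.one_mem⟩, rfl⟩

lemma myMapSndProd (A : Subgroup G₁) (B : Subgroup G₂) :
    (A.prod B).map (MonoidHom.snd G₁ G₂) = B := by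
  ext b
  constructor
  · rintro ⟨⟨x, y⟩, ⟨hx, hy⟩, rfl⟩; exact hy
  · intro hb; exact ⟨(1, b), ⟨A.one_mem, hb⟩, rfl⟩

lemma myLeProdMap (H : Subgroup (G₁ × G₂)) :
    H ≤ (H.map (MonoidHom.fst G₁ G₂)).prod (H.map (MonoidHom.snd G₁ G₂)) :=
  fun x hx => ⟨⟨x, hx, rfl⟩, ⟨x, hx, rfl⟩⟩

lemma myProdMono {A A' : Subgroup G₁} {B B' : Subgroup G₂} (hA : A ≤ A') (hB : B ≤ B') :
    A.prod B ≤ A'.prod B' := fun x hx => ⟨hA hx.1, hB hx.2⟩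

lemma myNilpotentMap {G H : Type*} [Group G] [Group H] (f : G →* H) (Q : Subgroup G)
    (hQ : Group.IsNilpotent Q) : Group.IsNilpotent (Q.map f) := by
  haveI := hQ
  exact nilpotent_of_surjective (f.subgroupMap Q) (f.subgroupMap_surjective Q)

lemma myNilpotentProd {A : Subgroup G₁} {B : Subgroup G₂}
    (hA : Group.IsNilpotent A) (hB : Group.IsNilpotent B) :
    Group.IsNilpotent (A.prod B) := by
  haveI := hA; haveI := hB
  exact nilpotent_of_surjective (A.prodEquiv B).symm.toMonoidHom
    (A.prodEquiv B).symm.surjective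

lemma myRelindexProd (A C : Subgroup G₁) (B D : Subgroup G₂) :
    (A.prod B).relIndex (C.prod D) = A.relIndex C * B.relIndex D := by
  have key : ((A.prod B).subgroupOf (C.prod D)).comap (C.prodEquiv D).symm.toMonoidHom
      = (A.subgroupOf C).prod (B.subgroupOf D) := by
    ext ⟨c, d⟩
    simp [Subgroup.mem_subgroupOf, Subgroup.mem_prod, Subgroup.prodEquiv, Equiv.Set.prod,
      Equiv.subtypeProdEquivProd]
    exact Iff.rfl
  calc (A.prod B).relIndex (C.prod D)
      = (((A.prod B).subgroupOf (C.prod D)).comap (C.prodEquiv D).symm.toMonoidHom).index :=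
        (Subgroup.index_comap_of_surjective _ (C.prodEquiv D).symm.surjective).symm
    _ = ((A.subgroupOf C).prod (B.subgroupOf D)).index := by rw [key]
    _ = A.relIndex C * B.relIndex D := Subgroup.index_prod _ _

lemma myProdNormalizerLe (A : Subgroup G₁) (B : Subgroup G₂) :
    (Subgroup.normalizer (A : Set (G₁))).prod (Subgroup.normalizer (B : Set (G₂))) ≤ (Subgroup.normalizer ((A.prod B) : Set (G₁ × G₂))) := by
  rintro ⟨n₁, n₂⟩ ⟨h1, h2⟩
  rw [Subgroup.mem_normalizer_iff]
  rintro ⟨x, y⟩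
  simp only [Subgroup.mem_prod, Prod.fst_mul, Prod.snd_mul, Prod.fst_inv, Prod.snd_inv]
  exact and_congr (Subgroup.mem_normalizer_iff.mp h1 x) (Subgroup.mem_normalizer_iff.mp h2 y)

lemma myNormalizerLeProd (X : Subgroup (G₁ × G₂)) :
    (Subgroup.normalizer (X : Set (G₁ × G₂))) ≤ (Subgroup.normalizer ((X.map (MonoidHom.fst G₁ G₂)) : Set (G₁))).prod
      (Subgroup.normalizer ((X.map (MonoidHom.snd G₁ G₂)) : Set (G₂))) := by
  rintro ⟨n₁, n₂⟩ hn
  rw [Subgroup.mem_normalizer_iff] at hn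
  have hn' : ∀ h : G₁ × G₂, h ∈ X ↔ (n₁, n₂)⁻¹ * h * (n₁, n₂) ∈ X := by
    intro h
    constructor
    · intro hh
      exact (hn ((n₁, n₂)⁻¹ * h * (n₁, n₂))).mpr (by group; simpa using hh)
    · intro hh
      have := (hn _).mp hh
      group at this
      simpa using this
  refine Subgroup.mem_prod.mpr ⟨Subgroup.mem_normalizer_iff.mpr ?_,
    Subgroup.mem_normalizer_iff.mpr ?_⟩
  · intro a
    constructor
    · rintro ⟨⟨a', b⟩, hab, rfl⟩
      exact ⟨(n₁, n₂) * (a', b) * (n₁, n₂)⁻¹, (hn (a', b)).mp hab, rfl⟩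
    · rintro ⟨⟨a', b⟩, hab, ha⟩
      refine ⟨(n₁, n₂)⁻¹ * (a', b) * (n₁, n₂), (hn' (a', b)).mp hab, ?_⟩
      simp only [MonoidHom.coe_fst] at ha ⊢
      simp only [Prod.fst_mul, Prod.fst_inv]
      rw [ha]; group
  · intro a
    constructor
    · rintro ⟨⟨b, a'⟩, hab, rfl⟩
      exact ⟨(n₁, n₂) * (b, a') * (n₁, n₂)⁻¹, (hn (b, a')).mp hab, rfl⟩
    · rintro ⟨⟨b, a'⟩, hab, ha⟩
      refine ⟨(n₁, n₂)⁻¹ * (b, a') * (n₁, n₂), (hn' (b, a')).mp hab, ?_⟩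
      simp only [MonoidHom.coe_snd] at ha ⊢
      simp only [Prod.snd_mul, Prod.snd_inv]
      rw [ha]; group

lemma myNormalProd {X₁ Q₁ : Subgroup G₁} (Q₂ : Subgroup G₂)
    (h : (X₁.subgroupOf Q₁).Normal) :
    ((X₁.prod Q₂).subgroupOf (Q₁.prod Q₂)).Normal := by
  constructor
  rintro n hn g
  rw [Subgroup.mem_subgroupOf] at hn ⊢
  obtain ⟨hn1, hn2⟩ := hn
  constructor
  · have := h.conj_mem ⟨(↑n : G₁ × G₂).1, n.2.1⟩ (Subgroup.mem_subgroupOf.mpr hn1)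
      ⟨(↑g : G₁ × G₂).1, g.2.1⟩
    rw [Subgroup.mem_subgroupOf] at this
    exact this
  · exact Q₂.mul_mem (Q₂.mul_mem g.2.2 hn2) (Q₂.inv_mem g.2.2)

lemma myNormalProd' (Q₁ : Subgroup G₁) {X₂ Q₂ : Subgroup G₂}
    (h : (X₂.subgroupOf Q₂).Normal) :
    ((Q₁.prod X₂).subgroupOf (Q₁.prod Q₂)).Normal := by
  constructor
  rintro n hn g
  rw [Subgroup.mem_subgroupOf] at hn ⊢
  obtain ⟨hn1, hn2⟩ := hn
  constructor
  · exact Q₁.mul_mem (Q₁.mul_mem g.2.1 hn1) (Q₁.inv_mem g.2.1)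
  · have := h.conj_mem ⟨(↑n : G₁ × G₂).2, n.2.2⟩ (Subgroup.mem_subgroupOf.mpr hn2)
      ⟨(↑g : G₁ × G₂).2, g.2.2⟩
    rw [Subgroup.mem_subgroupOf] at this
    exact this

lemma myNormalMapFst {X : Subgroup (G₁ × G₂)} {Q₁ : Subgroup G₁} {Q₂ : Subgroup G₂}
    (hle : X ≤ Q₁.prod Q₂) (h : (X.subgroupOf (Q₁.prod Q₂)).Normal) :
    ((X.map (MonoidHom.fst G₁ G₂)).subgroupOf Q₁).Normal := by
  constructor
  rintro a ha q
  rw [Subgroup.mem_subgroupOf] at ha ⊢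
  obtain ⟨⟨a', b⟩, hab, rfl⟩ := ha
  have hg : ((↑q : G₁), (1 : G₂)) ∈ Q₁.prod Q₂ := ⟨q.2, Q₂.one_mem⟩
  have := h.conj_mem ⟨((a : G₁), b), hle hab⟩ (Subgroup.mem_subgroupOf.mpr hab) ⟨_, hg⟩
  rw [Subgroup.mem_subgroupOf] at this
  exact ⟨_, this, by simp⟩

lemma myNormalMapSnd {X : Subgroup (G₁ × G₂)} {Q₁ : Subgroup G₁} {Q₂ : Subgroup G₂}
    (hle : X ≤ Q₁.prod Q₂) (h : (X.subgroupOf (Q₁.prod Q₂)).Normal) :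
    ((X.map (MonoidHom.snd G₁ G₂)).subgroupOf Q₂).Normal := by
  constructor
  rintro a ha q
  rw [Subgroup.mem_subgroupOf] at ha ⊢
  obtain ⟨⟨b, a'⟩, hab, rfl⟩ := ha
  have hg : ((1 : G₁), (↑q : G₂)) ∈ Q₁.prod Q₂ := ⟨Q₁.one_mem, q.2⟩
  have := h.conj_mem ⟨(b, (a : G₂)), hle hab⟩ (Subgroup.mem_subgroupOf.mpr hab) ⟨_, hg⟩
  rw [Subgroup.mem_subgroupOf] at this
  exact ⟨_, this, by simp⟩

end CartanAux

theorem cartan_stmt4 {G₁ G₂ : Type*} [Group G₁] [Group G₂] (Q : Subgroup (G₁ × G₂)) :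
    IsCartan Q ↔
      ∃ (Q₁ : Subgroup G₁) (Q₂ : Subgroup G₂),
        IsCartan Q₁ ∧ IsCartan Q₂ ∧ Q = Q₁.prod Q₂ := by
  constructor
  · rintro ⟨⟨hnil, hmax⟩, hfi⟩
    set Q₁ := Q.map (MonoidHom.fst G₁ G₂) with hQ₁def
    set Q₂ := Q.map (MonoidHom.snd G₁ G₂) with hQ₂def
    have hn₁ : Group.IsNilpotent Q₁ := myNilpotentMap _ _ hnil
    have hn₂ : Group.IsNilpotent Q₂ := myNilpotentMap _ _ hnil
    have hprod : Q₁.prod Q₂ = Q := hmax _ (myNilpotentProd hn₁ hn₂) (myLeProdMap Q)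
    refine ⟨Q₁, Q₂, ⟨⟨hn₁, ?_⟩, ?_⟩, ⟨⟨hn₂, ?_⟩, ?_⟩, hprod.symm⟩
    · -- maximality of Q₁
      intro H hH hle
      have hHQ : H.prod Q₂ = Q := hmax _ (myNilpotentProd hH hn₂)
        (by rw [← hprod]; exact myProdMono hle le_rfl)
      calc H = (H.prod Q₂).map (MonoidHom.fst G₁ G₂) := (myMapFstProd _ _).symm
        _ = Q₁ := by rw [hHQ]
    · -- condition (2) for Q₁
      intro X₁ hleX hnorm hfin
      have hXle : X₁.prod Q₂ ≤ Q := by rw [← hprod]; exact myProdMono hleX le_rfl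
      have hnorm' : ((X₁.prod Q₂).subgroupOf Q).Normal := by
        rw [← hprod]; exact myNormalProd Q₂ hnorm
      have hfin' : ((X₁.prod Q₂).subgroupOf Q).FiniteIndex := by
        constructor
        show (X₁.prod Q₂).relIndex Q ≠ 0
        rw [← hprod, myRelindexProd, Subgroup.relIndex_self, mul_one]
        exact hfin.index_ne_zero
      have hbig := hfi _ hXle hnorm' hfin'
      have h2 : (X₁.prod Q₂).relIndex (Subgroup.normalizer ((X₁.prod Q₂) : Set (G₁ × G₂))) ≠ 0 := hbig.index_ne_zero
      have hmid : (X₁.prod Q₂).relIndex ((Subgroup.normalizer (X₁ : Set (G₁))).prod (Subgroup.normalizer (Q₂ : Set (G₂)))) ≠ 0 := by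
        have htower := Subgroup.relIndex_mul_relIndex (X₁.prod Q₂)
          ((Subgroup.normalizer (X₁ : Set (G₁))).prod (Subgroup.normalizer (Q₂ : Set (G₂)))) (Subgroup.normalizer ((X₁.prod Q₂) : Set (G₁ × G₂)))
          (myProdMono Subgroup.le_normalizer Subgroup.le_normalizer)
          (myProdNormalizerLe _ _)
        intro h0
        rw [h0, zero_mul] at htower
        exact h2 htower.symm
      rw [myRelindexProd] at hmid
      exact ⟨left_ne_zero_of_mul hmid⟩
    · -- maximality of Q₂
      intro H hH hle
      have hHQ : Q₁.prod H = Q := hmax _ (myNilpotentProd hn₁ hH)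
        (by rw [← hprod]; exact myProdMono le_rfl hle)
      calc H = (Q₁.prod H).map (MonoidHom.snd G₁ G₂) := (myMapSndProd _ _).symm
        _ = Q₂ := by rw [hHQ]
    · -- condition (2) for Q₂
      intro X₂ hleX hnorm hfin
      have hXle : Q₁.prod X₂ ≤ Q := by rw [← hprod]; exact myProdMono le_rfl hleX
      have hnorm' : ((Q₁.prod X₂).subgroupOf Q).Normal := by
        rw [← hprod]; exact myNormalProd' Q₁ hnorm
      have hfin' : ((Q₁.prod X₂).subgroupOf Q).FiniteIndex := by
        constructor
        show (Q₁.prod X₂).relIndex Q ≠ 0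
        rw [← hprod, myRelindexProd, Subgroup.relIndex_self, one_mul]
        exact hfin.index_ne_zero
      have hbig := hfi _ hXle hnorm' hfin'
      have h2 : (Q₁.prod X₂).relIndex (Subgroup.normalizer ((Q₁.prod X₂) : Set (G₁ × G₂))) ≠ 0 := hbig.index_ne_zero
      have hmid : (Q₁.prod X₂).relIndex ((Subgroup.normalizer (Q₁ : Set (G₁))).prod (Subgroup.normalizer (X₂ : Set (G₂)))) ≠ 0 := by
        have htower := Subgroup.relIndex_mul_relIndex (Q₁.prod X₂)
          ((Subgroup.normalizer (Q₁ : Set (G₁))).prod (Subgroup.normalizer (X₂ : Set (G₂)))) (Subgroup.normalizer ((Q₁.prod X₂) : Set (G₁ × G₂)))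
          (myProdMono Subgroup.le_normalizer Subgroup.le_normalizer)
          (myProdNormalizerLe _ _)
        intro h0
        rw [h0, zero_mul] at htower
        exact h2 htower.symm
      rw [myRelindexProd] at hmid
      exact ⟨right_ne_zero_of_mul hmid⟩
  · rintro ⟨Q₁, Q₂, ⟨⟨hn₁, hmax₁⟩, hfi₁⟩, ⟨⟨hn₂, hmax₂⟩, hfi₂⟩, rfl⟩
    refine ⟨⟨myNilpotentProd hn₁ hn₂, ?_⟩, ?_⟩
    · -- maximality
      intro H hH hle
      have h1 : H.map (MonoidHom.fst G₁ G₂) = Q₁ := hmax₁ _ (myNilpotentMap _ _ hH)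
        (by rw [← myMapFstProd Q₁ Q₂]; exact Subgroup.map_mono hle)
      have h2 : H.map (MonoidHom.snd G₁ G₂) = Q₂ := hmax₂ _ (myNilpotentMap _ _ hH)
        (by rw [← myMapSndProd Q₁ Q₂]; exact Subgroup.map_mono hle)
      refine le_antisymm ?_ hle
      intro x hx
      have := myLeProdMap H hx
      rw [h1, h2] at this
      exact this
    · -- condition (2)
      intro X hleX hnorm hfin
      set P₁ := X.map (MonoidHom.fst G₁ G₂) with hP₁def
      set P₂ := X.map (MonoidHom.snd G₁ G₂) with hP₂def
      have hP₁Q : P₁ ≤ Q₁ := by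
        rw [hP₁def, ← myMapFstProd Q₁ Q₂]; exact Subgroup.map_mono hleX
      have hP₂Q : P₂ ≤ Q₂ := by
        rw [hP₂def, ← myMapSndProd Q₁ Q₂]; exact Subgroup.map_mono hleX
      have hXP : X ≤ P₁.prod P₂ := myLeProdMap X
      have hPQ : P₁.prod P₂ ≤ Q₁.prod Q₂ := myProdMono hP₁Q hP₂Q
      have hXQ : X.relIndex (Q₁.prod Q₂) ≠ 0 := hfin.index_ne_zero
      have htower := Subgroup.relIndex_mul_relIndex X (P₁.prod P₂) (Q₁.prod Q₂) hXP hPQ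
      have hprodne : X.relIndex (P₁.prod P₂) * (P₁.prod P₂).relIndex (Q₁.prod Q₂) ≠ 0 := by
        rw [htower]; exact hXQ
      have hXmid : X.relIndex (P₁.prod P₂) ≠ 0 := left_ne_zero_of_mul hprodne
      have hmidQ : (P₁.prod P₂).relIndex (Q₁.prod Q₂) ≠ 0 := right_ne_zero_of_mul hprodne
      rw [myRelindexProd] at hmidQ
      have hN₁ := hfi₁ P₁ hP₁Q (myNormalMapFst hleX hnorm) ⟨left_ne_zero_of_mul hmidQ⟩
      have hN₂ := hfi₂ P₂ hP₂Q (myNormalMapSnd hleX hnorm) ⟨right_ne_zero_of_mul hmidQ⟩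
      have hmidN : (P₁.prod P₂).relIndex ((Subgroup.normalizer (P₁ : Set (G₁))).prod (Subgroup.normalizer (P₂ : Set (G₂)))) ≠ 0 := by
        rw [myRelindexProd]
        exact mul_ne_zero hN₁.index_ne_zero hN₂.index_ne_zero
      have hXN' : X.relIndex ((Subgroup.normalizer (P₁ : Set (G₁))).prod (Subgroup.normalizer (P₂ : Set (G₂)))) ≠ 0 := by
        have ht := Subgroup.relIndex_mul_relIndex X (P₁.prod P₂)
          ((Subgroup.normalizer (P₁ : Set (G₁))).prod (Subgroup.normalizer (P₂ : Set (G₂)))) hXP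
          (myProdMono Subgroup.le_normalizer Subgroup.le_normalizer)
        rw [← ht]
        exact mul_ne_zero hXmid hmidN
      constructor
      have ht := Subgroup.relIndex_mul_relIndex X (Subgroup.normalizer (X : Set (G₁ × G₂)))
        ((Subgroup.normalizer (P₁ : Set (G₁))).prod (Subgroup.normalizer (P₂ : Set (G₂)))) Subgroup.le_normalizer (myNormalizerLeProd X)
      intro h0
      apply hXN'
      rw [← ht, show X.relIndex (Subgroup.normalizer (X : Set (G₁ × G₂))) = (X.subgroupOf (Subgroup.normalizer (X : Set (G₁ × G₂)))).index from rfl,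
        h0, zero_mul]
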